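/- The hypergeometric distribution is invariant under the involution x → N − x, α → β + 2 − α: for every integer x with 0 ≤ x ≤ N, w_{N−x}^{(β+2−α, β)} = w_x^{(α,β)}. -/
import Mathlib


/-- Pochhammer symbol `(a)_k = a (a+1) ⋯ (a+k-1)`, with `(a)_0 = 1`. -/
noncomputable def poch (a : ℝ) (k : ℕ) : ℝ := ∏ i ∈ Finset.range k, (a + (i : ℝ))

/-- The hypergeometric distribution `w_x^{(α,β)}`. -/
noncomputable def w (α β : ℝ) (N x : ℕ) : ℝ :=
  (poch (β - α - (N : ℝ) + 2) N / poch (β - (N : ℝ) + 1) N) *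
    (poch (-(N : ℝ)) x * poch (1 - α) x) /
      ((Nat.factorial x : ℝ) * poch (β - α - (N : ℝ) + 2) x)

lemma poch_succ (a : ℝ) (k : ℕ) : poch a (k+1) = poch a k * (a + k) := by
  simp [poch, Finset.prod_range_succ]

lemma poch_one (a : ℝ) : poch a 1 = a := by simp [poch]

lemma poch_split (a : ℝ) (m n : ℕ) : poch a (m + n) = poch a m * poch (a + m) n := by
  induction n with
  | zero => simp [poch]
  | succ n ih =>
    rw [show m + (n+1) = (m+n)+1 from rfl, poch_succ, ih, poch_succ]
    push_cast; ring

lemma poch_reflect (k : ℕ) : ∀ a : ℝ, poch a k = (-1)^k * poch (1 - a - k) k := by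
  induction k with
  | zero => simp [poch]
  | succ k ih =>
    intro a
    have h1 : poch a (k+1) = a * poch (a+1) k := by
      have h := poch_split a 1 k
      rw [show 1 + k = k + 1 from by ring] at h
      simpa [poch_one] using h
    rw [h1, ih (a+1), poch_succ]
    have harg1 : 1 - (a+1) - (k:ℝ) = -a - k := by ring
    have harg2 : 1 - a - ((k:ℕ)+1 : ℝ) = -a - k := by push_cast; ring
    rw [harg1]
    rw [show ((k+1 : ℕ) : ℝ) = (k:ℝ)+1 from by push_cast; ring, harg2]
    ring

lemma poch_neg (N x : ℕ) (h : x ≤ N) :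
    poch (-(N:ℝ)) x * ((N - x).factorial : ℝ) = (-1)^x * (N.factorial : ℝ) := by
  induction x with
  | zero => simp [poch]
  | succ x ih =>
    have hx : x ≤ N := by omega
    have key := ih hx
    have hfac : ((N - x).factorial : ℝ) = ((N - (x+1)).factorial : ℝ) * ((N - x : ℕ) : ℝ) := by
      have h1 : N - x = (N - (x+1)) + 1 := by omega
      rw [h1, Nat.factorial_succ]
      push_cast [show (N - (x+1)) + 1 = N - x from by omega]
      ring
    rw [hfac] at key
    have hc : (-(N:ℝ) + x) = -(((N - x : ℕ)) : ℝ) := by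
      rw [Nat.cast_sub hx]; ring
    rw [poch_succ, hc, pow_succ]
    linear_combination -key

lemma poch_ne_zero (a : ℝ) (k : ℕ) (h : ∀ i : ℕ, i < k → a + i ≠ 0) : poch a k ≠ 0 := by
  unfold poch
  exact Finset.prod_ne_zero_iff.mpr fun i hi => h i (Finset.mem_range.mp hi)

theorem statement9 (N : ℕ) (hN : 0 < N) (α β : ℝ)
    (hα : ∀ m : ℤ, α ≠ (m : ℝ)) (hβ : ∀ m : ℤ, β ≠ (m : ℝ))
    (hβα : ∀ m : ℤ, β - α ≠ (m : ℝ))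
    (x : ℕ) (hx : x ≤ N) :
    w (β + 2 - α) β N (N - x) = w α β N x := by
  obtain ⟨y, rfl⟩ : ∃ y, N = x + y := ⟨N - x, by omega⟩
  rw [show x + y - x = y from by omega]
  unfold w
  have hc : ((x + y : ℕ) : ℝ) = (x:ℝ) + y := by push_cast; ring
  rw [hc]
  rw [show β - (β + 2 - α) - ((x:ℝ) + y) + 2 = α - (x + y) from by ring]
  rw [show (1 : ℝ) - (β + 2 - α) = α - β - 1 from by ring]
  -- nonvanishing
  have hP : poch (β - ((x:ℝ) + y) + 1) (x + y) ≠ 0 := by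
    apply poch_ne_zero; intro i hi h0
    exact hβ ((x:ℤ) + y - 1 - i) (by push_cast; linarith)
  have hQ : poch (β - α - ((x:ℝ) + y) + 2) x ≠ 0 := by
    apply poch_ne_zero; intro i hi h0
    exact hβα ((x:ℤ) + y - 2 - i) (by push_cast; linarith)
  have hS : poch (α - ((x:ℝ) + y)) y ≠ 0 := by
    apply poch_ne_zero; intro i hi h0
    exact hα ((x:ℤ) + y - i) (by push_cast; linarith)
  have hfx : ((Nat.factorial x : ℕ) : ℝ) ≠ 0 := Nat.cast_ne_zero.mpr (Nat.factorial_ne_zero x)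
  have hfy : ((Nat.factorial y : ℕ) : ℝ) ≠ 0 := Nat.cast_ne_zero.mpr (Nat.factorial_ne_zero y)
  -- structural identities
  have F1 : poch (α - ((x:ℝ) + y)) (x + y)
      = poch (α - ((x:ℝ) + y)) y * poch (α - (x:ℝ)) x := by
    have h := poch_split (α - ((x:ℝ) + y)) y x
    rw [show y + x = x + y from by ring] at h
    rw [show α - ((x:ℝ) + y) + (y:ℝ) = α - x from by ring] at h
    exact h
  have F2 : poch (α - (x:ℝ)) x = (-1:ℝ)^x * poch (1 - α) x := by
    have h := poch_reflect x (α - (x:ℝ))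
    rw [show 1 - (α - (x:ℝ)) - (x:ℝ) = 1 - α from by ring] at h
    exact h
  have F3 : poch (α - β - 1) y
      = (-1:ℝ)^y * poch (β - α - ((x:ℝ) + y) + 2 + x) y := by
    have h := poch_reflect y (α - β - 1)
    rw [show 1 - (α - β - 1) - (y:ℝ) = β - α - ((x:ℝ) + y) + 2 + x from by ring] at h
    exact h
  have F4 : poch (β - α - ((x:ℝ) + y) + 2) (x + y)
      = poch (β - α - ((x:ℝ) + y) + 2) x * poch (β - α - ((x:ℝ) + y) + 2 + x) y := by
    exact poch_split _ x y
  have F5x : poch (-((x:ℝ) + y)) x = (-1:ℝ)^x * ((x+y).factorial : ℝ) / (y.factorial : ℝ) := by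
    have h := poch_neg (x + y) x (by omega)
    rw [show x + y - x = y from by omega, hc] at h
    rw [eq_div_iff hfy]
    exact h
  have F5y : poch (-((x:ℝ) + y)) y = (-1:ℝ)^y * ((x+y).factorial : ℝ) / (x.factorial : ℝ) := by
    have h := poch_neg (x + y) y (by omega)
    rw [show x + y - y = x from by omega, hc] at h
    rw [eq_div_iff hfx]
    exact h
  rw [F1, F2, F3, F4, F5x, F5y]
  field_simp
  ring_nf
  rw [show ((-1:ℝ))^(y*2) = 1 from by rw [mul_comm, pow_mul]; norm_num, mul_one]
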